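/- Let Y = Spec A be a reduced Noetherian affine scheme and M a finitely generated A-module. If the function y ↦ dim_{k(y)}(M ⊗_A k(y)) on prime ideals y of A is constant, then M is a flat (equivalently, projective) A-module. -/

import Mathlib

open scoped TensorProduct

universe u

set_option maxHeartbeats 1000000
set_option synthInstance.maxHeartbeats 400000

/-- The dimension of the fibre `M ⊗_A k(p)` of a module `M` at a prime `p`, where
`k(p) = Frac(A/p)` is the residue field at `p`; the base change to `k(p)` is performed
in two steps, first to `A/p` and then to its fraction field. -/
noncomputable def fibreDimension (A : Type u) [CommRing A]
    (M : Type u) [AddCommGroup M] [Module A M] (p : PrimeSpectrum A) : ℕ :=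
  Module.finrank (FractionRing (A ⧸ p.asIdeal))
    (FractionRing (A ⧸ p.asIdeal) ⊗[A ⧸ p.asIdeal] ((A ⧸ p.asIdeal) ⊗[A] M))

/-- For any field `L` which is an `A`-algebra with `ker (A → L) = p`, the dimension of
`L ⊗[A] M` over `L` equals the fibre dimension of `M` at `p`. -/
lemma finrank_tensor_eq_fibreDimension (A : Type u) [CommRing A]
    (M : Type u) [AddCommGroup M] [Module A M]
    (L : Type u) [Field L] [Algebra A L] (p : PrimeSpectrum A)
    (hker : RingHom.ker (algebraMap A L) = p.asIdeal) :
    Module.finrank L (L ⊗[A] M) = fibreDimension A M p := by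
  classical
  unfold fibreDimension
  set B := A ⧸ p.asIdeal
  set F := FractionRing B
  have e1 : Module.finrank F (F ⊗[B] (B ⊗[A] M)) = Module.finrank F (F ⊗[A] M) :=
    LinearEquiv.finrank_eq (TensorProduct.AlgebraTensorModule.cancelBaseChange A B F F M)
  rw [e1]
  have hg0 : ∀ x : A, x ∈ p.asIdeal → algebraMap A L x = 0 := fun x hx => by
    rw [← hker] at hx; exact hx
  let g : B →+* L := Ideal.Quotient.lift p.asIdeal (algebraMap A L) hg0
  have hginj : Function.Injective g := by
    rw [RingHom.injective_iff_ker_eq_bot, eq_bot_iff]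
    intro x hx
    obtain ⟨y, rfl⟩ := Ideal.Quotient.mk_surjective x
    rw [RingHom.mem_ker] at hx
    have hy : y ∈ p.asIdeal := by
      rw [← hker, RingHom.mem_ker]
      exact hx
    rw [Ideal.mem_bot]
    exact Ideal.Quotient.eq_zero_iff_mem.mpr hy
  letI : Algebra F L := (IsFractionRing.lift (K := F) hginj).toAlgebra
  haveI : IsScalarTower A F L := IsScalarTower.of_algebraMap_eq' (by
    ext x
    show algebraMap A L x = IsFractionRing.lift hginj (algebraMap A F x)
    rw [IsScalarTower.algebraMap_apply A B F, IsFractionRing.lift_algebraMap,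
      Ideal.Quotient.algebraMap_eq, Ideal.Quotient.lift_mk])
  haveI : Module.Free F (F ⊗[A] M) := Module.Free.of_divisionRing F (F ⊗[A] M)
  have e2 : Module.finrank L (L ⊗[F] (F ⊗[A] M)) = Module.finrank L (L ⊗[A] M) :=
    LinearEquiv.finrank_eq (TensorProduct.AlgebraTensorModule.cancelBaseChange A F L L M)
  rw [← e2, Module.finrank_baseChange]

/-- If `R` is a reduced local `A`-algebra and the fibre dimension of `M` is constantly `n`
at every field over `R`, then `R ⊗[A] M` is a free `R`-module. -/
lemma free_of_const_fibre (A R : Type u) [CommRing A] [CommRing R] [IsLocalRing R]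
    [IsReduced R] [Algebra A R] (M : Type u) [AddCommGroup M] [Module A M]
    [Module.Finite A M] (n : ℕ)
    (hdim : ∀ (L : Type u) [Field L] [Algebra R L] [Algebra A L] [IsScalarTower A R L],
      Module.finrank L (L ⊗[A] M) = n) :
    Module.Free R (R ⊗[A] M) := by
  classical
  let k := IsLocalRing.ResidueField R
  have hkfin : Module.finrank k (k ⊗[R] (R ⊗[A] M)) = n := by
    rw [LinearEquiv.finrank_eq (TensorProduct.AlgebraTensorModule.cancelBaseChange A R k k M)]
    exact hdim k
  haveI : Module.Finite k (k ⊗[R] (R ⊗[A] M)) := inferInstance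
  let b := Module.finBasisOfFinrankEq k (k ⊗[R] (R ⊗[A] M)) hkfin
  choose f hf using fun i => TensorProduct.mk_surjective R (R ⊗[A] M) k
    IsLocalRing.residue_surjective (b i)
  have hspan : Submodule.span R (Set.range f) = ⊤ :=
    IsLocalRing.span_eq_top_of_tmul_eq_basis (R := R) (M := R ⊗[A] M) f b hf
  let φ : (Fin n → R) →ₗ[R] (R ⊗[A] M) := Fintype.linearCombination R f
  have hφsurj : Function.Surjective φ := by
    rw [← LinearMap.range_eq_top, Fintype.range_linearCombination]
    exact hspan
  have hφinj : Function.Injective φ := by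
    rw [← LinearMap.ker_eq_bot, eq_bot_iff]
    intro x hx
    rw [LinearMap.mem_ker] at hx
    rw [Submodule.mem_bot]
    funext i
    rw [Pi.zero_apply]
    refine IsReduced.eq_zero _ (nilpotent_iff_mem_prime.mpr ?_)
    intro J hJ
    haveI := hJ
    let κ := FractionRing (R ⧸ J)
    have h1 : Module.finrank κ (κ ⊗[R] (R ⊗[A] M)) = n := by
      rw [LinearEquiv.finrank_eq (TensorProduct.AlgebraTensorModule.cancelBaseChange A R κ κ M)]
      exact hdim κ
    have h2 : Module.finrank κ (κ ⊗[R] (Fin n → R)) = n := by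
      rw [Module.finrank_baseChange, Module.finrank_fin_fun]
    have hψsurj : Function.Surjective (LinearMap.baseChange κ φ) := by
      rw [LinearMap.baseChange_eq_ltensor]
      exact LinearMap.lTensor_surjective κ hφsurj
    have hψinj : Function.Injective (LinearMap.baseChange κ φ) :=
      (LinearMap.injective_iff_surjective_of_finrank_eq_finrank
        (h2.trans h1.symm)).mpr hψsurj
    have hzero : (1 : κ) ⊗ₜ[R] x = (0 : κ ⊗[R] (Fin n → R)) := by
      apply hψinj
      rw [map_zero, LinearMap.baseChange_tmul, hx, TensorProduct.tmul_zero]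
    have hcoord := congrArg (LinearMap.baseChange κ (LinearMap.proj i : (Fin n → R) →ₗ[R] R))
      hzero
    rw [LinearMap.baseChange_tmul, map_zero] at hcoord
    have h3 : TensorProduct.AlgebraTensorModule.rid R κ κ ((1 : κ) ⊗ₜ[R] (x i))
        = TensorProduct.AlgebraTensorModule.rid R κ κ 0 := DFunLike.congr_arg _ hcoord
    rw [map_zero, TensorProduct.AlgebraTensorModule.rid_tmul] at h3
    have hmk : Ideal.Quotient.mk J (x i) = 0 := by
      apply IsFractionRing.injective (R ⧸ J) κ
      rw [map_zero]
      rw [← Ideal.Quotient.algebraMap_eq, ← IsScalarTower.algebraMap_apply R (R ⧸ J) κ]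
      rw [Algebra.algebraMap_eq_smul_one]
      exact h3
    exact Ideal.Quotient.eq_zero_iff_mem.mp hmk
  exact Module.Free.of_equiv (LinearEquiv.ofBijective φ ⟨hφinj, hφsurj⟩)

/-- Let `Y = Spec A` be a reduced Noetherian affine scheme and `M` a finitely generated
`A`-module.  If the function `y ↦ dim_{k(y)} (M ⊗_A k(y))` on `Spec A` is constant, then
`M` is a flat (equivalently, projective) `A`-module. -/
theorem flat_of_constant_fibreDimension (A : Type u) [CommRing A] [IsNoetherianRing A]
    [IsReduced A] (M : Type u) [AddCommGroup M] [Module A M] [Module.Finite A M]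
    (h : ∃ n : ℕ, ∀ p : PrimeSpectrum A, fibreDimension A M p = n) :
    Module.Flat A M ∧ Module.Projective A M := by
  obtain ⟨n, h⟩ := h
  haveI : Module.FinitePresentation A M := Module.finitePresentation_of_finite A M
  have hfree : ∀ p : PrimeSpectrum A, p ∈ Module.freeLocus A M := by
    intro p
    rw [Module.mem_freeLocus_iff_tensor p (Localization.AtPrime p.asIdeal)]
    refine free_of_const_fibre A (Localization.AtPrime p.asIdeal) M n ?_
    intro L _ _ _ _
    haveI : (RingHom.ker (algebraMap A L)).IsPrime := RingHom.ker_isPrime _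
    exact (finrank_tensor_eq_fibreDimension A M L
      ⟨RingHom.ker (algebraMap A L), inferInstance⟩ rfl).trans (h _)
  have hproj : Module.Projective A M :=
    Module.freeLocus_eq_univ_iff.mp (Set.eq_univ_iff_forall.mpr hfree)
  haveI := hproj
  exact ⟨Module.Flat.of_projective, hproj⟩
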